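/- Let κ ∈ (0,1), let f₁, f₂ ∈ ℝⁿ be orthonormal vectors, and let (x₁, x₂) ∈ ℝⁿ × ℝⁿ satisfy ‖x₁‖² + ‖x₂‖² − 2κ⟨x₁, x₂⟩ = 1 − κ². Then ⟨f₁, x₁⟩² + ⟨f₂, x₂⟩² ≤ 1. -/
import Mathlib


open scoped RealInnerProductSpace

/-- If `f₁, f₂ ∈ ℝⁿ` are orthonormal and `(x₁,x₂)` lies on the ellipsoid
`‖x₁‖² + ‖x₂‖² − 2κ⟨x₁,x₂⟩ = 1 − κ²` with `κ ∈ (0,1)`, then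
`⟨f₁,x₁⟩² + ⟨f₂,x₂⟩² ≤ 1`. -/
theorem stmt2 (n : ℕ) (κ : ℝ) (hκ : κ ∈ Set.Ioo (0:ℝ) 1)
    (f₁ f₂ x₁ x₂ : EuclideanSpace ℝ (Fin n))
    (hf₁ : ‖f₁‖ = 1) (hf₂ : ‖f₂‖ = 1) (hf : ⟪f₁, f₂⟫ = 0)
    (hx : ‖x₁‖ ^ 2 + ‖x₂‖ ^ 2 - 2 * κ * ⟪x₁, x₂⟫ = 1 - κ ^ 2) :
    ⟪f₁, x₁⟫ ^ 2 + ⟪f₂, x₂⟫ ^ 2 ≤ 1 := by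
  obtain ⟨hκ0, hκ1⟩ := hκ
  have hf11 : ⟪f₁, f₁⟫ = 1 := by
    rw [real_inner_self_eq_norm_sq, hf₁]; norm_num
  have hf22 : ⟪f₂, f₂⟫ = 1 := by
    rw [real_inner_self_eq_norm_sq, hf₂]; norm_num
  have hf21 : ⟪f₂, f₁⟫ = 0 := by rw [real_inner_comm]; exact hf
  obtain ⟨a, ha⟩ : ∃ a : ℝ, ⟪f₁, x₁⟫ = a := ⟨_, rfl⟩
  obtain ⟨c, hc⟩ : ∃ c : ℝ, ⟪f₂, x₁⟫ = c := ⟨_, rfl⟩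
  obtain ⟨d, hd⟩ : ∃ d : ℝ, ⟪f₁, x₂⟫ = d := ⟨_, rfl⟩
  obtain ⟨b, hb⟩ : ∃ b : ℝ, ⟪f₂, x₂⟫ = b := ⟨_, rfl⟩
  have c1 : ⟪x₁, f₁⟫ = a := by rw [real_inner_comm]; exact ha
  have c2 : ⟪x₁, f₂⟫ = c := by rw [real_inner_comm]; exact hc
  have c3 : ⟪x₂, f₁⟫ = d := by rw [real_inner_comm]; exact hd
  have c4 : ⟪x₂, f₂⟫ = b := by rw [real_inner_comm]; exact hb
  obtain ⟨r₁, hr₁⟩ : ∃ r, r = x₁ - a • f₁ - c • f₂ := ⟨_, rfl⟩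
  obtain ⟨r₂, hr₂⟩ : ∃ r, r = x₂ - d • f₁ - b • f₂ := ⟨_, rfl⟩
  have e1 : ‖r₁‖ ^ 2 = ‖x₁‖ ^ 2 - a ^ 2 - c ^ 2 := by
    rw [← real_inner_self_eq_norm_sq, ← real_inner_self_eq_norm_sq, hr₁]
    simp only [inner_sub_left, inner_sub_right, real_inner_smul_left,
      real_inner_smul_right, hf11, hf22, hf, hf21, c1, c2, ha, hc]
    ring
  have e2 : ‖r₂‖ ^ 2 = ‖x₂‖ ^ 2 - d ^ 2 - b ^ 2 := by
    rw [← real_inner_self_eq_norm_sq, ← real_inner_self_eq_norm_sq, hr₂]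
    simp only [inner_sub_left, inner_sub_right, real_inner_smul_left,
      real_inner_smul_right, hf11, hf22, hf, hf21, c3, c4, hd, hb]
    ring
  have e3 : ⟪r₁, r₂⟫ = ⟪x₁, x₂⟫ - a * d - c * b := by
    rw [hr₁, hr₂]
    simp only [inner_sub_left, inner_sub_right, real_inner_smul_left,
      real_inner_smul_right, hf11, hf22, hf, hf21, c1, c2, hd, hb]
    ring
  have key : 2 * ⟪r₁, r₂⟫ ≤ ‖r₁‖ ^ 2 + ‖r₂‖ ^ 2 := by
    have h := sq_nonneg (‖r₁ - r₂‖)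
    rw [norm_sub_sq_real] at h
    linarith
  have hres : 0 ≤ ‖r₁‖ ^ 2 + ‖r₂‖ ^ 2 - 2 * κ * ⟪r₁, r₂⟫ := by
    rcases le_or_gt ⟪r₁, r₂⟫ 0 with h | h
    · nlinarith [sq_nonneg ‖r₁‖, sq_nonneg ‖r₂‖]
    · nlinarith
  rw [e1, e2, e3] at hres
  have hpos : (0:ℝ) < 1 - κ ^ 2 :=
    sub_pos.2 (pow_lt_one₀ hκ0.le hκ1 (by norm_num))
  rw [ha, hb]
  clear ha hb hc hd c1 c2 c3 c4 e1 e2 e3 key hr₁ hr₂ hf11 hf22 hf21 hf hf₁ hf₂ r₁ r₂ f₁ f₂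
  nlinarith [sq_nonneg (d - κ * a), sq_nonneg (c - κ * b), hpos, hres, hx]
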